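/- Let A, B, V, W ∈ M_m(ℝ) and let C ∈ M_m(ℝ) be invertible with C(4W − V²) = (4B − A²)C. Then the equalities {(4B − A²) A^(n)}·(CV − AC) = (CV − AC)·{(4W − V²) V^(n)} hold for all n = 0, 1, …, m² − 1 if and only if {(4B − A²) A^(n) (CVC⁻¹ − A)} = 0 for all n = 0, 1, …, m² − 1. -/
import Mathlib


open Matrix

/-- The iterated commutator `{Z A^(n)}`: `{Z A^(0)} = Z`,
`{Z A^(n+1)} = [{Z A^(n)}, A]` where `[X, Y] = X*Y - Y*X`. -/
def itComm {m : ℕ} (Z A : Matrix (Fin m) (Fin m) ℝ) : ℕ → Matrix (Fin m) (Fin m) ℝ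
  | 0 => Z
  | n + 1 => itComm Z A n * A - A * itComm Z A n

/-- Let `C` be invertible with `C(4W − V²) = (4B − A²)C`.  Then
`{(4B − A²) A^(n)}·(CV − AC) = (CV − AC)·{(4W − V²) V^(n)}` for `n = 0, …, m² − 1`
iff `{(4B − A²) A^(n) (CVC⁻¹ − A)} = 0` for `n = 0, …, m² − 1`. -/
theorem stmt_13 {m : ℕ} (A B V W C : Matrix (Fin m) (Fin m) ℝ) (hC : IsUnit C)
    (hCW : C * ((4:ℝ) • W - V ^ 2) = ((4:ℝ) • B - A ^ 2) * C) :
    (∀ n < m ^ 2,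
        itComm ((4:ℝ) • B - A ^ 2) A n * (C * V - A * C)
          = (C * V - A * C) * itComm ((4:ℝ) • W - V ^ 2) V n) ↔
      (∀ n < m ^ 2,
        itComm ((4:ℝ) • B - A ^ 2) A n * (C * V * C⁻¹ - A)
          - (C * V * C⁻¹ - A) * itComm ((4:ℝ) • B - A ^ 2) A n = 0) := by
  have hdet : IsUnit C.det := (Matrix.isUnit_iff_isUnit_det C).mp hC
  have hCi : C * C⁻¹ = 1 := Matrix.mul_nonsing_inv C hdet
  have hiC : C⁻¹ * C = 1 := Matrix.nonsing_inv_mul C hdet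
  set P := (4:ℝ) • B - A ^ 2 with hP
  set Q := (4:ℝ) • W - V ^ 2 with hQ
  set X := C * V * C⁻¹ with hXdef
  have hXC : X * C = C * V := by
    rw [hXdef, mul_assoc, hiC, mul_one]
  have cancel : ∀ E F : Matrix (Fin m) (Fin m) ℝ, E * C = F * C → E = F := by
    intro E F h
    have := congrArg (· * C⁻¹) h
    simpa [mul_assoc, hCi] using this
  have hconj : ∀ n, C * itComm Q V n = itComm P X n * C := by
    intro n
    induction n with
    | zero => simpa [itComm] using hCW
    | succ k ih =>
      show C * (itComm Q V k * V - V * itComm Q V k)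
          = (itComm P X k * X - X * itComm P X k) * C
      have e1 : C * itComm Q V k * V = itComm P X k * X * C := by
        rw [ih, mul_assoc, ← hXC, ← mul_assoc]
      have e2 : C * (V * itComm Q V k) = X * itComm P X k * C := by
        rw [← mul_assoc, ← hXC, mul_assoc, ih, ← mul_assoc]
      rw [mul_sub, sub_mul, ← mul_assoc C (itComm Q V k) V, e1, e2]
  have h1 : C * V - A * C = (X - A) * C := by rw [sub_mul, hXC]
  have hleft : ∀ n, (itComm P A n * (C * V - A * C)
        = (C * V - A * C) * itComm Q V n)
      ↔ itComm P A n * (X - A) = (X - A) * itComm P X n := by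
    intro n
    constructor
    · intro h
      apply cancel
      calc itComm P A n * (X - A) * C = itComm P A n * (C * V - A * C) := by
            rw [h1, mul_assoc]
        _ = (C * V - A * C) * itComm Q V n := h
        _ = (X - A) * (C * itComm Q V n) := by rw [h1, mul_assoc]
        _ = (X - A) * itComm P X n * C := by rw [hconj n, mul_assoc]
    · intro h
      calc itComm P A n * (C * V - A * C) = itComm P A n * (X - A) * C := by
            rw [h1, mul_assoc]
        _ = (X - A) * itComm P X n * C := by rw [h]
        _ = (X - A) * (C * itComm Q V n) := by rw [hconj n, mul_assoc]
        _ = (C * V - A * C) * itComm Q V n := by rw [h1, mul_assoc]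
  constructor
  · intro hL
    have key : ∀ n, n < m ^ 2 → itComm P X n = itComm P A n ∧
        itComm P A n * (X - A) = (X - A) * itComm P A n := by
      intro n
      induction n using Nat.strong_induction_on with
      | _ n ih =>
        intro hn
        have hS : itComm P X n = itComm P A n := by
          match n with
          | 0 => rfl
          | k + 1 =>
            obtain ⟨hSk, hck⟩ := ih k (Nat.lt_succ_self k)
              (lt_trans (Nat.lt_succ_self k) hn)
            show itComm P X k * X - X * itComm P X k
              = itComm P A k * A - A * itComm P A k
            rw [hSk]
            rw [mul_sub, sub_mul] at hck
            rw [sub_eq_sub_iff_sub_eq_sub]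
            exact hck
        refine ⟨hS, ?_⟩
        have h2 := (hleft n).mp (hL n hn)
        rw [hS] at h2
        exact h2
    intro n hn
    rw [(key n hn).2, sub_self]
  · intro hR
    have key : ∀ n, n < m ^ 2 → itComm P X n = itComm P A n := by
      intro n
      induction n with
      | zero => intro _; rfl
      | succ k ih =>
        intro hk
        have hk' : k < m ^ 2 := lt_trans (Nat.lt_succ_self k) hk
        have hck := hR k hk'
        rw [sub_eq_zero] at hck
        show itComm P X k * X - X * itComm P X k
          = itComm P A k * A - A * itComm P A k
        rw [ih hk']
        rw [mul_sub, sub_mul] at hck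
        rw [sub_eq_sub_iff_sub_eq_sub]
        exact hck
    intro n hn
    apply (hleft n).mpr
    rw [key n hn]
    have h2 := hR n hn
    rwa [sub_eq_zero] at h2
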